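/- Let p be an odd prime, G a group of order p^5 with G ≅ C_{p^2} × C_p^3 scenario: specifically, let V ≤ G with V ≅ C_p^3, G/V ≅ C_p^2 generated by Vx and Vy, and suppose A is an indecomposable S-ring over G whose thin radical is V and whose basic sets outside V are exactly the cosets L_{ij}x^i y^j v with L_{ij} ≤ V of order p^2 (for (i,j) ≠ (0,0), v ranging over V). Then L_{ij} = L_{i'j'} if and only if ⟨V, x^i y^j⟩ = ⟨V, x^{i'} y^{j'}⟩. -/

import Mathlib

open scoped Pointwise

/-- An S-ring (Schur ring) over a finite group `G`, presented by its
partition into basic sets: a partition of `G` containing `{1}`, closed under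
inversion, and such that the span of the indicator elements is closed under
multiplication (expressed via constancy of structure constants). -/
structure SRing (G : Type*) [Group G] where
  parts : Set (Set G)
  nonempty_mem : ∀ X ∈ parts, X.Nonempty
  one_mem : ({(1 : G)} : Set G) ∈ parts
  exists_mem : ∀ g : G, ∃ X ∈ parts, g ∈ X
  eq_of_mem : ∀ X ∈ parts, ∀ Y ∈ parts, ∀ g : G, g ∈ X → g ∈ Y → X = Y
  inv_mem : ∀ X ∈ parts, X⁻¹ ∈ parts
  structConst : ∀ X ∈ parts, ∀ Y ∈ parts, ∀ Z ∈ parts, ∀ z₁ ∈ Z, ∀ z₂ ∈ Z,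
    {q : G × G | q.1 ∈ X ∧ q.2 ∈ Y ∧ q.1 * q.2 = z₁}.ncard =
    {q : G × G | q.1 ∈ X ∧ q.2 ∈ Y ∧ q.1 * q.2 = z₂}.ncard

namespace SRing

variable {G : Type*} [Group G]

/-- The thin radical of an S-ring: the set of group elements whose
singleton is a basic set. -/
def thin (A : SRing G) : Set G := {x : G | ({x} : Set G) ∈ A.parts}

/-- A subgroup `H` is an `A`-subgroup if it is a union of basic sets. -/
def IsASubgroup (A : SRing G) (H : Subgroup G) : Prop :=
  ∀ X ∈ A.parts, ∀ g ∈ X, g ∈ H → X ⊆ (H : Set G)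

/-- `A = ZG`, i.e. every basic set is a singleton. -/
def IsFull (A : SRing G) : Prop := ∀ X ∈ A.parts, ∃ g : G, X = {g}

/-- A permutation is an automorphism of the S-ring `A` if it preserves the
partition of `G × G` induced by the basic sets. -/
def IsAut (A : SRing G) (f : Equiv.Perm G) : Prop :=
  ∀ X ∈ A.parts, ∀ x y : G, y * x⁻¹ ∈ X ↔ (f y) * (f x)⁻¹ ∈ X

end SRing

/-- The radical of a subset `X` of a group: the subgroup of elements `g`
with `g • X = X` (left translations stabilizing `X`). -/
def setRad {G : Type*} [Group G] (X : Set G) : Subgroup G where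
  carrier := {g : G | g • X = X}
  one_mem' := one_smul G X
  mul_mem' := by
    intro a b ha hb
    simp only [Set.mem_setOf_eq] at *
    rw [mul_smul, hb, ha]
  inv_mem' := by
    intro a ha
    simp only [Set.mem_setOf_eq] at *
    calc a⁻¹ • X = a⁻¹ • (a • X) := by rw [ha]
    _ = X := inv_smul_smul a X

/-- A permutation of `G` belongs to the holomorph `Hol(G)` if it is the
composition of an automorphism of `G` with a right translation. -/
def IsHolPerm {G : Type*} [Group G] (f : Equiv.Perm G) : Prop :=
  ∃ σ : MulAut G, ∃ a : G, ∀ g : G, f g = σ g * a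

namespace SRing

variable {G : Type*} [Group G]

/-- An S-ring is normal if all of its automorphisms lie in the holomorph. -/
def IsNormal (A : SRing G) : Prop := ∀ f : Equiv.Perm G, A.IsAut f → IsHolPerm f

/-- `f ∈ Iso(A)`: `f` is a combinatorial isomorphism from `A` onto some
S-ring over `G`. -/
def IsIsoPerm (A : SRing G) (f : Equiv.Perm G) : Prop :=
  ∃ B : SRing G, ∀ X ∈ A.parts, ∃ X' ∈ B.parts,
    ∀ x y : G, y * x⁻¹ ∈ X ↔ (f y) * (f x)⁻¹ ∈ X'

/-- An S-ring is CI if `Iso(A) = Aut(A)·Aut(G)`. -/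
def IsCI (A : SRing G) : Prop :=
  ∀ f : Equiv.Perm G, A.IsIsoPerm f →
    ∃ a : Equiv.Perm G, A.IsAut a ∧ ∃ σ : MulAut G, ∀ x : G, f x = a (σ x)

end SRing


namespace P2C
variable {G : Type*} [CommGroup G]

lemma exists_pow_eq {H : Type*} [Group H] [Finite H] (g : H) (n : ℤ) :
    ∃ k : ℕ, g ^ n = g ^ k := by
  refine ⟨(n % (orderOf g : ℤ)).toNat, ?_⟩
  have hpos : 0 < orderOf g := orderOf_pos g
  conv_lhs => rw [← Int.mul_ediv_add_emod n (orderOf g : ℤ)]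
  rw [zpow_add, zpow_mul, zpow_natCast, pow_orderOf_eq_one, one_zpow, one_mul,
    ← zpow_natCast, Int.toNat_of_nonneg (Int.emod_nonneg n (by exact_mod_cast hpos.ne'))]

lemma coset_subset {H K : Subgroup G} {u s : G}
    (h : (H : Set G) * {u} ⊆ (K : Set G) * {s}) : (H : Set G) ⊆ (K : Set G) := by
  intro g hg
  have h1 : g * u ∈ (K : Set G) * {s} := h (Set.mul_mem_mul hg (Set.mem_singleton u))
  have h0 : (1 : G) * u ∈ (K : Set G) * {s} :=
    h (Set.mul_mem_mul H.one_mem (Set.mem_singleton u))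
  rw [Set.mem_mul] at h1 h0
  obtain ⟨k1, hk1, w1, hw1, he1⟩ := h1
  obtain ⟨k0, hk0, w0, hw0, he0⟩ := h0
  rw [Set.mem_singleton_iff] at hw1 hw0
  rw [hw1] at he1; rw [hw0] at he0
  rw [one_mul] at he0
  have hg' : g = k1 * k0⁻¹ := by
    have h2 : g = k1 * s * (k0 * s)⁻¹ := by rw [he1, he0, mul_inv_cancel_right]
    rw [h2, mul_inv_rev, ← mul_assoc, mul_assoc k1 s s⁻¹, mul_inv_cancel, mul_one]
  rw [hg']
  exact mul_mem hk1 (inv_mem hk0)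

lemma smul_coset {H : Subgroup G} {l : G} (hl : l ∈ H) (t : G) :
    l • ((H : Set G) * {t}) = (H : Set G) * {t} := by
  rw [← smul_mul_assoc, smul_coe_set hl]

lemma subset_mul {G : Type*} [Group G] [Finite G] (A : SRing G) {X Y Z : Set G}
    (hX : X ∈ A.parts) (hY : Y ∈ A.parts) (hZ : Z ∈ A.parts) {z₁ : G}
    (hz₁ : z₁ ∈ Z) (hz₁m : z₁ ∈ X * Y) : Z ⊆ X * Y := by
  intro z₂ hz₂
  have hc := A.structConst X hX Y hY Z hZ z₁ hz₁ z₂ hz₂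
  have h1 : ({q : G × G | q.1 ∈ X ∧ q.2 ∈ Y ∧ q.1 * q.2 = z₁}).Nonempty := by
    obtain ⟨a, ha, b, hb, hab⟩ := hz₁m
    exact ⟨(a, b), ha, hb, hab⟩
  have hpos : 0 < ({q : G × G | q.1 ∈ X ∧ q.2 ∈ Y ∧ q.1 * q.2 = z₁}).ncard :=
    (Set.ncard_pos (Set.toFinite _)).2 h1
  rw [hc] at hpos
  obtain ⟨⟨a, b⟩, ha, hb, hab⟩ := (Set.ncard_pos (Set.toFinite _)).1 hpos
  exact ⟨a, ha, b, hb, hab⟩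

end P2C

/-- Let `p` be an odd prime, `G` abelian of order `p^5`,
`V ≤ G` with `V ≅ C_p³` and `G/V ≅ C_p²` generated by the images of
`x, y`. Suppose `A` is an indecomposable S-ring over `G` with thin
radical `V` whose basic sets outside `V` are exactly the cosets
`L_{ij}·x^i y^j v` with `L_{ij} ≤ V` of order `p²`. Then
`L_{ij} = L_{i'j'}` iff `⟨V, x^i y^j⟩ = ⟨V, x^{i'} y^{j'}⟩`. -/
theorem p2coset1 {p : ℕ} (hp : p.Prime) (hodd : p ≠ 2)
    {G : Type*} [CommGroup G] [Fintype G] (hcard : Nat.card G = p ^ 5)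
    (V : Subgroup G)
    (hV : Nonempty (V ≃* Multiplicative (ZMod p) × Multiplicative (ZMod p) ×
      Multiplicative (ZMod p)))
    (x y : G)
    (hrep : ∀ g : G, ∃ i j : ℕ, i < p ∧ j < p ∧ g * (x ^ i * y ^ j)⁻¹ ∈ V)
    (hfree : ∀ i j : ℕ, x ^ i * y ^ j ∈ V → p ∣ i ∧ p ∣ j)
    (A : SRing G) (hthin : A.thin = (V : Set G))
    (hind : ¬ ∃ U L : Subgroup G, L ≤ U ∧ L ≠ ⊥ ∧ U ≠ ⊤ ∧
      A.IsASubgroup U ∧ A.IsASubgroup L ∧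
      ∀ X ∈ A.parts, ¬ X ⊆ (U : Set G) → ∀ l ∈ L, l • X = X)
    (L : ℕ → ℕ → Subgroup G)
    (hLV : ∀ i j : ℕ, i < p → j < p → ¬ (i = 0 ∧ j = 0) →
      L i j ≤ V ∧ Nat.card (L i j) = p ^ 2)
    (hcoset_mem : ∀ i j : ℕ, i < p → j < p → ¬ (i = 0 ∧ j = 0) → ∀ v ∈ V,
      ((L i j : Set G) * {x ^ i * y ^ j * v}) ∈ A.parts)
    (houtside : ∀ X ∈ A.parts, ¬ X ⊆ (V : Set G) →
      ∃ i j : ℕ, i < p ∧ j < p ∧ ¬ (i = 0 ∧ j = 0) ∧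
        ∃ v ∈ V, X = (L i j : Set G) * {x ^ i * y ^ j * v}) :
    ∀ i j i' j' : ℕ, i < p → j < p → ¬ (i = 0 ∧ j = 0) →
      i' < p → j' < p → ¬ (i' = 0 ∧ j' = 0) →
      (L i j = L i' j' ↔
        V ⊔ Subgroup.closure {x ^ i * y ^ j} =
          V ⊔ Subgroup.closure {x ^ i' * y ^ j'}) := by
  intro i j i' j' hi hj hij hi' hj' hij'
  have hp1 : 1 < p := hp.one_lt
  haveI : Fact p.Prime := ⟨hp⟩
  haveI : NeZero p := ⟨hp.pos.ne'⟩
  obtain ⟨eV⟩ := hV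
  have hcardV : Nat.card V = p ^ 3 := by
    rw [Nat.card_congr eV.toEquiv, Nat.card_prod, Nat.card_prod,
      Nat.card_congr Multiplicative.toAdd, Nat.card_zmod]
    ring
  have hcardQ : Nat.card (G ⧸ V) = p ^ 2 := by
    have h := Subgroup.card_eq_card_quotient_mul_card_subgroup V
    rw [hcard, hcardV, show p ^ 5 = p ^ 2 * p ^ 3 by ring] at h
    exact (Nat.eq_of_mul_eq_mul_right (by positivity) h.symm)
  have horder : ∀ g : G ⧸ V, orderOf g ∣ p ∨ orderOf g = p ^ 2 := by
    intro g
    have hdvd : orderOf g ∣ p ^ 2 := hcardQ ▸ orderOf_dvd_natCard g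
    obtain ⟨m, hm, he⟩ := (Nat.dvd_prime_pow hp).1 hdvd
    rcases Nat.lt_or_ge m 2 with h | h
    · left; rw [he]
      have h2 := pow_dvd_pow p (show m ≤ 1 by omega)
      rwa [pow_one] at h2
    · right; rw [he]; congr 1; omega
  have hxp : x ^ p ∈ V := by
    rw [← QuotientGroup.eq_one_iff, QuotientGroup.mk_pow]
    rcases horder ((x : G) : G ⧸ V) with hd | he
    · exact orderOf_dvd_iff_pow_eq_one.1 hd
    · exfalso
      have htop : Subgroup.zpowers ((x : G) : G ⧸ V) = ⊤ :=
        Subgroup.eq_top_of_card_eq _ (by rw [Nat.card_zpowers, he, hcardQ])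
      have hY : ((y : G) : G ⧸ V) ∈ Subgroup.zpowers ((x : G) : G ⧸ V) := by
        rw [htop]; trivial
      rw [Subgroup.mem_zpowers_iff] at hY
      obtain ⟨n, hn⟩ := hY
      obtain ⟨k, hk⟩ := P2C.exists_pow_eq ((x : G) : G ⧸ V) n
      have hrlt : k % p ^ 2 < p ^ 2 := Nat.mod_lt _ (by positivity)
      have hXr : ((x : G) : G ⧸ V) ^ (k % p ^ 2) = ((y : G) : G ⧸ V) := by
        rw [← he, pow_mod_orderOf, ← hk, hn]
      have hfin : x ^ (p ^ 2 - k % p ^ 2) * y ^ 1 ∈ V := by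
        rw [← QuotientGroup.eq_one_iff, QuotientGroup.mk_mul, QuotientGroup.mk_pow,
          QuotientGroup.mk_pow, pow_one, ← hXr, ← pow_add,
          Nat.sub_add_cancel hrlt.le, ← he, pow_orderOf_eq_one]
      have hcon := (hfree _ _ hfin).2
      rw [Nat.dvd_one] at hcon; omega
  have hyp : y ^ p ∈ V := by
    rw [← QuotientGroup.eq_one_iff, QuotientGroup.mk_pow]
    rcases horder ((y : G) : G ⧸ V) with hd | he
    · exact orderOf_dvd_iff_pow_eq_one.1 hd
    · exfalso
      have htop : Subgroup.zpowers ((y : G) : G ⧸ V) = ⊤ :=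
        Subgroup.eq_top_of_card_eq _ (by rw [Nat.card_zpowers, he, hcardQ])
      have hY : ((x : G) : G ⧸ V) ∈ Subgroup.zpowers ((y : G) : G ⧸ V) := by
        rw [htop]; trivial
      rw [Subgroup.mem_zpowers_iff] at hY
      obtain ⟨n, hn⟩ := hY
      obtain ⟨k, hk⟩ := P2C.exists_pow_eq ((y : G) : G ⧸ V) n
      have hrlt : k % p ^ 2 < p ^ 2 := Nat.mod_lt _ (by positivity)
      have hXr : ((y : G) : G ⧸ V) ^ (k % p ^ 2) = ((x : G) : G ⧸ V) := by
        rw [← he, pow_mod_orderOf, ← hk, hn]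
      have hfin : x ^ 1 * y ^ (p ^ 2 - k % p ^ 2) ∈ V := by
        rw [← QuotientGroup.eq_one_iff, QuotientGroup.mk_mul, QuotientGroup.mk_pow,
          QuotientGroup.mk_pow, pow_one, mul_comm, ← hXr, ← pow_add,
          Nat.sub_add_cancel hrlt.le, ← he, pow_orderOf_eq_one]
      have hcon := (hfree _ _ hfin).1
      rw [Nat.dvd_one] at hcon; omega
  have hmemV : ∀ a b : ℕ, x ^ a * y ^ b ∈ V ↔ p ∣ a ∧ p ∣ b := by
    intro a b
    constructor
    · exact hfree a b
    · rintro ⟨⟨a', rfl⟩, ⟨b', rfl⟩⟩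
      rw [pow_mul, pow_mul]
      exact mul_mem (pow_mem hxp a') (pow_mem hyp b')
  have hred : ∀ a b : ℕ, x ^ a * y ^ b * (x ^ (a % p) * y ^ (b % p))⁻¹ ∈ V := by
    intro a b
    have ea : x ^ a = (x ^ p) ^ (a / p) * x ^ (a % p) := by
      rw [← pow_mul, ← pow_add, Nat.div_add_mod]
    have eb : y ^ b = (y ^ p) ^ (b / p) * y ^ (b % p) := by
      rw [← pow_mul, ← pow_add, Nat.div_add_mod]
    have e : x ^ a * y ^ b =
        ((x ^ p) ^ (a / p) * (y ^ p) ^ (b / p)) * (x ^ (a % p) * y ^ (b % p)) := by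
      rw [ea, eb, mul_mul_mul_comm]
    rw [e, mul_inv_cancel_right]
    exact mul_mem (pow_mem hxp _) (pow_mem hyp _)
  have hlt : ∀ a b c d : ℕ, a < p → b < p → c < p → d < p →
      x ^ a * y ^ b * (x ^ c * y ^ d)⁻¹ ∈ V → a = c ∧ b = d := by
    intro a b c d ha hb hc hd hm
    have ex : x ^ (p - c) = x ^ p * (x ^ c)⁻¹ := by
      rw [eq_mul_inv_iff_mul_eq, ← pow_add, Nat.sub_add_cancel hc.le]
    have ey : y ^ (p - d) = y ^ p * (y ^ d)⁻¹ := by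
      rw [eq_mul_inv_iff_mul_eq, ← pow_add, Nat.sub_add_cancel hd.le]
    have e : x ^ (a + (p - c)) * y ^ (b + (p - d)) =
        (x ^ a * y ^ b * (x ^ c * y ^ d)⁻¹) * (x ^ p * y ^ p) := by
      rw [pow_add, pow_add, ex, ey, mul_inv_rev]
      simp only [mul_comm, mul_left_comm, mul_assoc]
    have hv : x ^ (a + (p - c)) * y ^ (b + (p - d)) ∈ V := by
      rw [e]; exact mul_mem hm (mul_mem hxp hyp)
    obtain ⟨h1, h2⟩ := hfree _ _ hv
    constructor
    · obtain ⟨t, ht⟩ := h1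
      rcases t with _ | _ | t
      · omega
      · omega
      · exfalso
        have h3 : p * (t + 1 + 1) = p * t + 2 * p := by ring
        omega
    · obtain ⟨t, ht⟩ := h2
      rcases t with _ | _ | t
      · omega
      · omega
      · exfalso
        have h3 : p * (t + 1 + 1) = p * t + 2 * p := by ring
        omega
  have hrel : ∀ a b c d : ℕ, (x ^ a * y ^ b * (x ^ c * y ^ d)⁻¹ ∈ V ↔
      (a % p = c % p ∧ b % p = d % p)) := by
    intro a b c d
    constructor
    · intro hm
      have m1 := hred a b
      have m2 := hred c d
      have e1 : x ^ (a % p) * y ^ (b % p) * (x ^ (c % p) * y ^ (d % p))⁻¹ =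
          (x ^ a * y ^ b * (x ^ (a % p) * y ^ (b % p))⁻¹)⁻¹ *
          (x ^ a * y ^ b * (x ^ c * y ^ d)⁻¹) *
          (x ^ c * y ^ d * (x ^ (c % p) * y ^ (d % p))⁻¹) := by
        group
      have hm2 : x ^ (a % p) * y ^ (b % p) * (x ^ (c % p) * y ^ (d % p))⁻¹ ∈ V := by
        rw [e1]; exact mul_mem (mul_mem (inv_mem m1) hm) m2
      exact hlt _ _ _ _ (Nat.mod_lt _ hp.pos) (Nat.mod_lt _ hp.pos)
        (Nat.mod_lt _ hp.pos) (Nat.mod_lt _ hp.pos) hm2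
    · rintro ⟨h1, h2⟩
      have m1 := hred a b
      have m2 := hred c d
      rw [h1, h2] at m1
      have e1 : x ^ a * y ^ b * (x ^ c * y ^ d)⁻¹ =
          (x ^ a * y ^ b * (x ^ (c % p) * y ^ (d % p))⁻¹) *
          (x ^ c * y ^ d * (x ^ (c % p) * y ^ (d % p))⁻¹)⁻¹ := by
        group
      rw [e1]; exact mul_mem m1 (inv_mem m2)
  have hsingle : ∀ v : G, v ∈ V → ({v} : Set G) ∈ A.parts := by
    intro v hv
    have hthin' : v ∈ A.thin := by rw [hthin]; exact hv
    exact hthin'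
  have hsub : ∀ H : Subgroup G, H ≤ V → A.IsASubgroup H := by
    intro H hH X hX g hg hgH
    have h1 := hsingle g (hH hgH)
    have h2 := A.eq_of_mem X hX {g} h1 g hg rfl
    rw [h2]
    exact Set.singleton_subset_iff.2 hgH
  have keyF : ∀ a b c d : ℕ, a < p → b < p → ¬(a = 0 ∧ b = 0) → c < p → d < p →
      ¬(c = 0 ∧ d = 0) → L a b = L c d → ¬((a + c) % p = 0 ∧ (b + d) % p = 0) →
      L ((a + c) % p) ((b + d) % p) = L a b := by
    intro a b c d ha hb hab hc hd hcd hEq hsum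
    have hXmem := hcoset_mem a b ha hb hab 1 V.one_mem
    have hYmem := hcoset_mem c d hc hd hcd 1 V.one_mem
    have hz0 : (x ^ a * y ^ b * 1) * (x ^ c * y ^ d * 1) = x ^ (a + c) * y ^ (b + d) := by
      rw [mul_one, mul_one, pow_add, pow_add, mul_mul_mul_comm]
    have hz0X : x ^ a * y ^ b * 1 ∈ (L a b : Set G) * {x ^ a * y ^ b * 1} :=
      ⟨1, (L a b).one_mem, _, Set.mem_singleton _, one_mul _⟩
    have hz0Y : x ^ c * y ^ d * 1 ∈ (L c d : Set G) * {x ^ c * y ^ d * 1} :=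
      ⟨1, (L c d).one_mem, _, Set.mem_singleton _, one_mul _⟩
    have hz0m : x ^ (a + c) * y ^ (b + d) ∈
        ((L a b : Set G) * {x ^ a * y ^ b * 1}) * ((L c d : Set G) * {x ^ c * y ^ d * 1}) := by
      rw [← hz0]; exact Set.mul_mem_mul hz0X hz0Y
    obtain ⟨Z, hZ, hz0Z⟩ := A.exists_mem (x ^ (a + c) * y ^ (b + d))
    have hz0V : x ^ (a + c) * y ^ (b + d) ∉ V := by
      intro hmem
      obtain ⟨h1, h2⟩ := (hmemV _ _).1 hmem
      exact hsum ⟨Nat.mod_eq_zero_of_dvd h1, Nat.mod_eq_zero_of_dvd h2⟩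
    have hZV : ¬ Z ⊆ (V : Set G) := fun hs => hz0V (hs hz0Z)
    obtain ⟨a', b', ha', hb', hab', v, hv, hZeq⟩ := houtside Z hZ hZV
    have hZsub := P2C.subset_mul A hXmem hYmem hZ hz0Z hz0m
    have hXY : ((L a b : Set G) * {x ^ a * y ^ b * 1}) * ((L c d : Set G) * {x ^ c * y ^ d * 1}) =
        (L a b : Set G) * {x ^ (a + c) * y ^ (b + d)} := by
      rw [mul_mul_mul_comm, ← hEq, coe_mul_coe, Set.singleton_mul_singleton, hz0]
    rw [hXY] at hZsub
    have hg'Z : x ^ a' * y ^ b' * v ∈ Z := by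
      rw [hZeq]; exact ⟨1, (L a' b').one_mem, _, Set.mem_singleton _, one_mul _⟩
    obtain ⟨l, hl, w, hw, hlw⟩ := hZsub hg'Z
    rw [Set.mem_singleton_iff] at hw
    rw [hw] at hlw
    have hrelm : x ^ a' * y ^ b' * (x ^ (a + c) * y ^ (b + d))⁻¹ ∈ V := by
      have e2 : x ^ a' * y ^ b' * (x ^ (a + c) * y ^ (b + d))⁻¹ =
          (x ^ a' * y ^ b' * v) * (x ^ (a + c) * y ^ (b + d))⁻¹ * v⁻¹ := by
        rw [mul_right_comm (x ^ a' * y ^ b') v, mul_inv_cancel_right]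
      rw [e2, ← hlw, mul_inv_cancel_right]
      exact mul_mem ((hLV a b ha hb hab).1 hl) (inv_mem hv)
    obtain ⟨hac, hbd⟩ := (hrel a' b' (a + c) (b + d)).1 hrelm
    rw [Nat.mod_eq_of_lt ha'] at hac
    rw [Nat.mod_eq_of_lt hb'] at hbd
    have hss : (L a' b' : Set G) * {x ^ a' * y ^ b' * v} ⊆
        (L a b : Set G) * {x ^ (a + c) * y ^ (b + d)} := by
      rw [← hZeq]; exact hZsub
    have hle : L a' b' ≤ L a b := SetLike.coe_subset_coe.1 (P2C.coset_subset hss)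
    have hcardeq : Nat.card (L a b) ≤ Nat.card (L a' b') := by
      rw [(hLV a b ha hb hab).2, (hLV a' b' ha' hb' hab').2]
    have hfin := Subgroup.eq_of_le_of_card_ge hle hcardeq
    rw [← hac, ← hbd]
    exact hfin
  have hline : ∀ k a b : ℕ, a < p → b < p → ¬(a = 0 ∧ b = 0) → ¬ p ∣ k →
      L (k * a % p) (k * b % p) = L a b := by
    intro k
    induction k with
    | zero => intro a b _ _ _ hk; exact absurd (dvd_zero p) hk
    | succ k ih =>
      intro a b ha hb hab hk
      by_cases hpk : p ∣ k
      · obtain ⟨c, rfl⟩ := hpk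
        have e1 : (p * c + 1) * a % p = a := by
          rw [show (p * c + 1) * a = a + p * (c * a) by ring,
            Nat.add_mul_mod_self_left, Nat.mod_eq_of_lt ha]
        have e2 : (p * c + 1) * b % p = b := by
          rw [show (p * c + 1) * b = b + p * (c * b) by ring,
            Nat.add_mul_mod_self_left, Nat.mod_eq_of_lt hb]
        rw [e1, e2]
      · have IH := ih a b ha hb hab hpk
        have hne1 : ¬(k * a % p = 0 ∧ k * b % p = 0) := by
          rintro ⟨h1, h2⟩
          have da : p ∣ a := ((Nat.Prime.dvd_mul hp).1 (Nat.dvd_of_mod_eq_zero h1)).resolve_left hpk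
          have db : p ∣ b := ((Nat.Prime.dvd_mul hp).1 (Nat.dvd_of_mod_eq_zero h2)).resolve_left hpk
          exact hab ⟨Nat.eq_zero_of_dvd_of_lt da ha, Nat.eq_zero_of_dvd_of_lt db hb⟩
        have hsum : ¬((k * a % p + a) % p = 0 ∧ (k * b % p + b) % p = 0) := by
          rintro ⟨h1, h2⟩
          rw [Nat.mod_add_mod] at h1 h2
          rw [show k * a + a = (k + 1) * a by ring] at h1
          rw [show k * b + b = (k + 1) * b by ring] at h2
          have da : p ∣ a := ((Nat.Prime.dvd_mul hp).1 (Nat.dvd_of_mod_eq_zero h1)).resolve_left hk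
          have db : p ∣ b := ((Nat.Prime.dvd_mul hp).1 (Nat.dvd_of_mod_eq_zero h2)).resolve_left hk
          exact hab ⟨Nat.eq_zero_of_dvd_of_lt da ha, Nat.eq_zero_of_dvd_of_lt db hb⟩
        have hres := keyF (k * a % p) (k * b % p) a b (Nat.mod_lt _ hp.pos)
          (Nat.mod_lt _ hp.pos) hne1 ha hb hab IH hsum
        rw [IH, Nat.mod_add_mod, Nat.mod_add_mod,
          show k * a + a = (k + 1) * a by ring,
          show k * b + b = (k + 1) * b by ring] at hres
        exact hres
  have hcastz : ∀ a : ℕ, a < p → (((a : ZMod p) = 0) ↔ a = 0) := by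
    intro a ha
    rw [ZMod.natCast_eq_zero_iff]
    constructor
    · intro h; exact Nat.eq_zero_of_dvd_of_lt h ha
    · rintro rfl; exact dvd_zero p
  have hvalmod : ∀ (t : ZMod p) (c k : ℕ), c < p → ((c : ZMod p) = t * (k : ZMod p)) →
      c = t.val * k % p := by
    intro t c k hc hck
    have h1 : ((t.val * k : ℕ) : ZMod p) = t * (k : ZMod p) := by
      push_cast [ZMod.natCast_zmod_val]; ring
    have h2 : ((c : ℕ) : ZMod p) = ((t.val * k : ℕ) : ZMod p) := by rw [h1, hck]
    rw [ZMod.natCast_eq_natCast_iff'] at h2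
    rw [Nat.mod_eq_of_lt hc] at h2
    exact h2
  have hndvd : ∀ t : ZMod p, t ≠ 0 → ¬ p ∣ t.val := by
    intro t ht hd
    have hvlt : t.val < p := ZMod.val_lt t
    have : t.val = 0 := Nat.eq_zero_of_dvd_of_lt hd hvlt
    exact ht ((ZMod.val_eq_zero t).1 this)
  have hmpr : ∀ a b c d : ℕ, a < p → b < p → ¬(a = 0 ∧ b = 0) →
      c < p → d < p → ¬(c = 0 ∧ d = 0) →
      V ⊔ Subgroup.closure {x ^ a * y ^ b} = V ⊔ Subgroup.closure {x ^ c * y ^ d} →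
      L c d = L a b := by
    intro a b c d ha hb hab hc hd hcd hsup
    have hmem : x ^ c * y ^ d ∈ V ⊔ Subgroup.closure {x ^ a * y ^ b} := by
      rw [hsup]
      exact Subgroup.mem_sup_right (Subgroup.subset_closure (Set.mem_singleton _))
    rw [Subgroup.mem_sup] at hmem
    obtain ⟨v, hv, z, hz, hvz⟩ := hmem
    rw [Subgroup.mem_closure_singleton] at hz
    obtain ⟨n, hn⟩ := hz
    obtain ⟨k, hk⟩ := P2C.exists_pow_eq (x ^ a * y ^ b) n
    have e : (x ^ a * y ^ b) ^ k = x ^ (k * a) * y ^ (k * b) := by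
      rw [mul_pow, ← pow_mul, ← pow_mul, Nat.mul_comm a k, Nat.mul_comm b k]
    have heq : x ^ c * y ^ d = v * (x ^ (k * a) * y ^ (k * b)) := by
      rw [← e, ← hk, hn, hvz]
    have hval : x ^ c * y ^ d * (x ^ (k * a) * y ^ (k * b))⁻¹ ∈ V := by
      rw [heq, mul_inv_cancel_right]
      exact hv
    obtain ⟨h1, h2⟩ := (hrel c d (k * a) (k * b)).1 hval
    rw [Nat.mod_eq_of_lt hc] at h1
    rw [Nat.mod_eq_of_lt hd] at h2
    have hpk : ¬ p ∣ k := by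
      intro hdv
      obtain ⟨m, rfl⟩ := hdv
      rw [show p * m * a = p * (m * a) by ring, Nat.mul_mod_right] at h1
      rw [show p * m * b = p * (m * b) by ring, Nat.mul_mod_right] at h2
      exact hcd ⟨h1, h2⟩
    have hl := hline k a b ha hb hab hpk
    rw [← h1, ← h2] at hl
    exact hl
  refine ⟨fun hL => ?_, fun h => (hmpr i j i' j' hi hj hij hi' hj' hij' h).symm⟩
  by_contra hne
  -- a helper: proportional exponent vectors give inclusion of the corresponding subgroups
  have hdir : ∀ a b c d : ℕ, c < p → d < p → ∀ t' : ZMod p,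
      (c : ZMod p) = t' * (a : ZMod p) → (d : ZMod p) = t' * (b : ZMod p) →
      V ⊔ Subgroup.closure {x ^ c * y ^ d} ≤ V ⊔ Subgroup.closure {x ^ a * y ^ b} := by
    intro a b c d hcp hdp t' hca hdb
    have h1 : c = t'.val * a % p := hvalmod t' c a hcp hca
    have h2 : d = t'.val * b % p := hvalmod t' d b hdp hdb
    have hmem : x ^ c * y ^ d * (x ^ (t'.val * a) * y ^ (t'.val * b))⁻¹ ∈ V := by
      rw [hrel c d (t'.val * a) (t'.val * b)]
      constructor
      · rw [Nat.mod_eq_of_lt hcp]; exact h1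
      · rw [Nat.mod_eq_of_lt hdp]; exact h2
    have e : (x ^ a * y ^ b) ^ t'.val = x ^ (t'.val * a) * y ^ (t'.val * b) := by
      rw [mul_pow, ← pow_mul, ← pow_mul, Nat.mul_comm a t'.val, Nat.mul_comm b t'.val]
    have hxyc : x ^ c * y ^ d =
        (x ^ c * y ^ d * (x ^ (t'.val * a) * y ^ (t'.val * b))⁻¹) * (x ^ a * y ^ b) ^ t'.val := by
      rw [e, inv_mul_cancel_right]
    have hmem2 : x ^ c * y ^ d ∈ V ⊔ Subgroup.closure {x ^ a * y ^ b} := by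
      rw [hxyc]
      exact mul_mem (Subgroup.mem_sup_left hmem)
        (Subgroup.mem_sup_right (pow_mem (Subgroup.subset_closure (Set.mem_singleton _)) _))
    exact sup_le le_sup_left ((Subgroup.closure_le _).2 (Set.singleton_subset_iff.2 hmem2))
  have hdet : (i : ZMod p) * (j' : ZMod p) - (j : ZMod p) * (i' : ZMod p) ≠ 0 := by
    intro hd
    have hprop : ∃ t : ZMod p, t ≠ 0 ∧ (i' : ZMod p) = t * (i : ZMod p) ∧
        (j' : ZMod p) = t * (j : ZMod p) := by
      by_cases hI : (i : ZMod p) = 0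
      · have hJ : (j : ZMod p) ≠ 0 := by
          intro h0
          exact hij ⟨(hcastz i hi).1 hI, (hcastz j hj).1 h0⟩
        have hI' : (i' : ZMod p) = 0 := by
          have h3 : (j : ZMod p) * (i' : ZMod p) = 0 := by
            rw [hI] at hd
            rw [zero_mul, zero_sub, neg_eq_zero] at hd
            exact hd
          rcases mul_eq_zero.1 h3 with h4 | h4
          · exact absurd h4 hJ
          · exact h4
        refine ⟨(j' : ZMod p) * (j : ZMod p)⁻¹, ?_, ?_, ?_⟩
        · intro h0
          rcases mul_eq_zero.1 h0 with h4 | h4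
          · exact hij' ⟨(hcastz i' hi').1 hI', (hcastz j' hj').1 h4⟩
          · exact hJ (inv_eq_zero.1 h4)
        · rw [hI, hI', mul_zero]
        · field_simp
      · refine ⟨(i' : ZMod p) * (i : ZMod p)⁻¹, ?_, ?_, ?_⟩
        · intro h0
          rcases mul_eq_zero.1 h0 with h4 | h4
          · have h3 : (i : ZMod p) * (j' : ZMod p) = 0 := by
              rw [h4] at hd
              rw [mul_zero, sub_zero] at hd
              exact hd
            rcases mul_eq_zero.1 h3 with h5 | h5
            · exact hI h5
            · exact hij' ⟨(hcastz i' hi').1 h4, (hcastz j' hj').1 h5⟩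
          · exact hI (inv_eq_zero.1 h4)
        · field_simp
        · field_simp
          linear_combination hd
    obtain ⟨t, ht, hti, htj⟩ := hprop
    have hti' : (i : ZMod p) = t⁻¹ * (i' : ZMod p) := by
      rw [hti]; field_simp
    have htj' : (j : ZMod p) = t⁻¹ * (j' : ZMod p) := by
      rw [htj]; field_simp
    exact hne (le_antisymm (hdir i' j' i j hi hj t⁻¹ hti' htj')
      (hdir i j i' j' hi' hj' t hti htj))
  have hall : ∀ a b : ℕ, a < p → b < p → ¬(a = 0 ∧ b = 0) → L a b = L i j := by
    intro a b ha hb hab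
    set D : ZMod p := (i : ZMod p) * (j' : ZMod p) - (j : ZMod p) * (i' : ZMod p) with hD
    set t : ZMod p := ((a : ZMod p) * (j' : ZMod p) - (b : ZMod p) * (i' : ZMod p)) / D with htd
    set s : ZMod p := ((b : ZMod p) * (i : ZMod p) - (a : ZMod p) * (j : ZMod p)) / D with hsd
    have hD0 : D ≠ 0 := hdet
    have hA : (a : ZMod p) = t * (i : ZMod p) + s * (i' : ZMod p) := by
      rw [htd, hsd, div_mul_eq_mul_div, div_mul_eq_mul_div, ← add_div, eq_div_iff hD0, hD]
      ring
    have hB : (b : ZMod p) = t * (j : ZMod p) + s * (j' : ZMod p) := by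
      rw [htd, hsd, div_mul_eq_mul_div, div_mul_eq_mul_div, ← add_div, eq_div_iff hD0, hD]
      ring
    by_cases ht0 : t = 0
    · -- a ≡ s·i', b ≡ s·j'
      rw [ht0, zero_mul, zero_add] at hA hB
      have hs0 : s ≠ 0 := by
        intro h0
        rw [h0, zero_mul] at hA hB
        exact hab ⟨(hcastz a ha).1 hA, (hcastz b hb).1 hB⟩
      have h1 : a = s.val * i' % p := hvalmod s a i' ha hA
      have h2 : b = s.val * j' % p := hvalmod s b j' hb hB
      have hl := hline s.val i' j' hi' hj' hij' (hndvd s hs0)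
      rw [← h1, ← h2] at hl
      exact hl.trans hL.symm
    · by_cases hs0 : s = 0
      · rw [hs0, zero_mul, add_zero] at hA hB
        have h1 : a = t.val * i % p := hvalmod t a i ha hA
        have h2 : b = t.val * j % p := hvalmod t b j hb hB
        have hl := hline t.val i j hi hj hij (hndvd t ht0)
        rw [← h1, ← h2] at hl
        exact hl
      · -- both nonzero
        have hl1 := hline t.val i j hi hj hij (hndvd t ht0)
        have hl2 := hline s.val i' j' hi' hj' hij' (hndvd s hs0)
        have hl2' : L (s.val * i' % p) (s.val * j' % p) = L i j := hl2.trans hL.symm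
        have hcastA : ((t.val * i + s.val * i' : ℕ) : ZMod p) = (a : ZMod p) := by
          push_cast [ZMod.natCast_zmod_val]
          rw [hA]
        have hcastB : ((t.val * j + s.val * j' : ℕ) : ZMod p) = (b : ZMod p) := by
          push_cast [ZMod.natCast_zmod_val]
          rw [hB]
        rw [ZMod.natCast_eq_natCast_iff'] at hcastA hcastB
        rw [Nat.mod_eq_of_lt ha] at hcastA
        rw [Nat.mod_eq_of_lt hb] at hcastB
        have hidx1 : (t.val * i % p + s.val * i' % p) % p = a := by
          rw [Nat.mod_add_mod, Nat.add_mod_mod, hcastA]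
        have hidx2 : (t.val * j % p + s.val * j' % p) % p = b := by
          rw [Nat.mod_add_mod, Nat.add_mod_mod, hcastB]
        have hne1 : ¬(t.val * i % p = 0 ∧ t.val * j % p = 0) := by
          rintro ⟨h1, h2⟩
          have da : p ∣ i := ((Nat.Prime.dvd_mul hp).1
            (Nat.dvd_of_mod_eq_zero h1)).resolve_left (hndvd t ht0)
          have db : p ∣ j := ((Nat.Prime.dvd_mul hp).1
            (Nat.dvd_of_mod_eq_zero h2)).resolve_left (hndvd t ht0)
          exact hij ⟨Nat.eq_zero_of_dvd_of_lt da hi, Nat.eq_zero_of_dvd_of_lt db hj⟩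
        have hne2 : ¬(s.val * i' % p = 0 ∧ s.val * j' % p = 0) := by
          rintro ⟨h1, h2⟩
          have da : p ∣ i' := ((Nat.Prime.dvd_mul hp).1
            (Nat.dvd_of_mod_eq_zero h1)).resolve_left (hndvd s hs0)
          have db : p ∣ j' := ((Nat.Prime.dvd_mul hp).1
            (Nat.dvd_of_mod_eq_zero h2)).resolve_left (hndvd s hs0)
          exact hij' ⟨Nat.eq_zero_of_dvd_of_lt da hi', Nat.eq_zero_of_dvd_of_lt db hj'⟩
        have hsum : ¬((t.val * i % p + s.val * i' % p) % p = 0 ∧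
            (t.val * j % p + s.val * j' % p) % p = 0) := by
          rw [hidx1, hidx2]
          exact hab
        have hres := keyF (t.val * i % p) (t.val * j % p) (s.val * i' % p) (s.val * j' % p)
          (Nat.mod_lt _ hp.pos) (Nat.mod_lt _ hp.pos) hne1 (Nat.mod_lt _ hp.pos)
          (Nat.mod_lt _ hp.pos) hne2 (hl1.trans hl2'.symm) hsum
        rw [hidx1, hidx2, hl1] at hres
        exact hres
  -- contradiction with indecomposability
  refine hind ⟨V, L i j, (hLV i j hi hj hij).1, ?_, ?_, hsub V le_rfl,
    hsub (L i j) (hLV i j hi hj hij).1, ?_⟩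
  · intro h0
    have hc2 := (hLV i j hi hj hij).2
    rw [h0] at hc2
    rw [Subgroup.card_bot] at hc2
    have h12 : 1 < p ^ 2 := Nat.one_lt_pow (by omega) hp1
    omega
  · intro h0
    rw [h0] at hcardV
    rw [Subgroup.card_top, hcard] at hcardV
    have h35 : p ^ 3 < p ^ 5 := Nat.pow_lt_pow_right hp1 (by omega)
    omega
  · intro X hX hXV l hl
    obtain ⟨a, b, ha, hb, hab, v, hv, hXeq⟩ := houtside X hX hXV
    rw [hXeq]
    exact P2C.smul_coset ((hall a b ha hb hab).symm ▸ hl) _
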